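/- Let μ, ν be locally finite infinite measures on ℝ₊ with densities dμ/dm, dν/dm ∈ C¹ which are strictly positive (m = Lebesgue measure). If (d/dx)(dν/dμ)(x) / (dν/dm)(x) → 0 as x → +∞, then for every fixed r > 0, lim_{M→∞} sup over intervals V ⊂ (M,∞) with μ(V) = r of [ (sup_V dν/dμ)·(inf_V dν/dμ)^{-1} − 1 ] = 0. -/

import Mathlib

open Real Filter MeasureTheory ENNReal

/-- let `μ, ν` have strictly positive `C¹` densities `f, g` w.r.t.
Lebesgue measure on `ℝ₊`. If `(d/dx)(g/f)(x) / g(x) → 0` as `x → +∞`, then for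
every fixed `r > 0` the oscillation `sup_V (g/f) / inf_V (g/f) − 1` over
intervals `V ⊆ (M,∞)` with `μ(V) = r` tends to `0` as `M → ∞`. -/
theorem stmt_4 (f g : ℝ → ℝ)
    (hf : ContDiff ℝ 1 f) (hg : ContDiff ℝ 1 g)
    (hfpos : ∀ x : ℝ, 0 < f x) (hgpos : ∀ x : ℝ, 0 < g x)
    (μ ν : Measure ℝ)
    (hμ : μ = volume.withDensity (fun x => ENNReal.ofReal (f x)))
    (hν : ν = volume.withDensity (fun x => ENNReal.ofReal (g x)))
    (hμinf : μ (Set.Ici 0) = ⊤) (hνinf : ν (Set.Ici 0) = ⊤)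
    (hflat : Tendsto (fun x => deriv (fun y => g y / f y) x / g x)
      atTop (nhds 0)) :
    ∀ r : ℝ, 0 < r → ∀ ε : ℝ, 0 < ε → ∃ M : ℝ, 0 ≤ M ∧
      ∀ a b : ℝ, M < a → a ≤ b → (μ (Set.Icc a b)).toReal = r →
        sSup ((fun x => g x / f x) '' Set.Icc a b) /
          sInf ((fun x => g x / f x) '' Set.Icc a b) - 1 ≤ ε := by
  intro r hr ε hε
  set h : ℝ → ℝ := fun x => g x / f x with hh
  have hfne : ∀ x, f x ≠ 0 := fun x => (hfpos x).ne'
  have hC1 : ContDiff ℝ 1 h := hg.div hf hfne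
  have hcont : Continuous h := hC1.continuous
  have hdcont : Continuous (deriv h) := hC1.continuous_deriv le_rfl
  have hδ : 0 < ε / (r * (1 + ε)) := by positivity
  set δ := ε / (r * (1 + ε)) with hδdef
  obtain ⟨M₀, hM₀⟩ : ∃ M₀, ∀ x ≥ M₀, |deriv h x| / |g x| < δ := by
    have := (Metric.tendsto_nhds.mp hflat δ hδ)
    rw [eventually_atTop] at this
    obtain ⟨M₀, hM₀⟩ := this
    exact ⟨M₀, fun x hx => by simpa [Real.dist_eq, abs_div] using hM₀ x hx⟩
  refine ⟨max M₀ 0, le_max_right _ _, ?_⟩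
  intro a b ha hab hμr
  have haM₀ : M₀ ≤ a := le_of_lt (lt_of_le_of_lt (le_max_left _ _) ha)
  have hbound : ∀ x ∈ Set.Icc a b, |deriv h x| ≤ δ * g x := by
    intro x hx
    have hx0 : M₀ ≤ x := le_trans haM₀ hx.1
    have hlt := hM₀ x hx0
    have hgx := hgpos x
    rw [abs_of_pos hgx, div_lt_iff₀ hgx] at hlt
    exact hlt.le
  have hne : (Set.Icc a b).Nonempty := Set.nonempty_Icc.mpr hab
  have hK : IsCompact (Set.Icc a b) := isCompact_Icc
  obtain ⟨p, hp, hSp⟩ := hK.exists_sSup_image_eq hne hcont.continuousOn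
  obtain ⟨q, hq, hIq⟩ := hK.exists_sInf_image_eq hne hcont.continuousOn
  have hintf : IntegrableOn f (Set.Icc a b) := hf.continuous.integrableOn_Icc
  have hintg : IntegrableOn g (Set.Icc a b) := hg.continuous.integrableOn_Icc
  have hintd : IntegrableOn (fun x => |deriv h x|) (Set.Icc a b) :=
    hdcont.abs.integrableOn_Icc
  have hμint : ∫ x in Set.Icc a b, f x = r := by
    rw [hμ, MeasureTheory.withDensity_apply _ measurableSet_Icc,
      ← MeasureTheory.ofReal_integral_eq_lintegral_ofReal hintf
        (Filter.Eventually.of_forall fun x => (hfpos x).le),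
      ENNReal.toReal_ofReal
        (setIntegral_nonneg measurableSet_Icc fun x _ => (hfpos x).le)] at hμr
    exact hμr
  have hdiffh : ∀ x, DifferentiableAt ℝ h x := fun x =>
    (hC1.differentiable one_ne_zero) x
  have hftc : h p - h q = ∫ t in q..p, deriv h t := by
    rw [intervalIntegral.integral_deriv_eq_sub (fun x _ => hdiffh x)
      (hdcont.intervalIntegrable _ _)]
  have hsub : Set.uIoc q p ⊆ Set.Icc a b := by
    rw [Set.uIoc]
    intro x hx
    constructor
    · exact le_trans (le_min hq.1 hp.1) (le_of_lt hx.1)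
    · exact le_trans hx.2 (max_le hq.2 hp.2)
  have step1 : h p - h q ≤ ∫ x in Set.Icc a b, |deriv h x| := by
    rw [hftc]
    calc ∫ t in q..p, deriv h t ≤ |∫ t in q..p, deriv h t| := le_abs_self _
      _ ≤ ∫ t in Set.uIoc q p, |deriv h t| := by
          simpa using intervalIntegral.norm_integral_le_integral_norm_uIoc
            (f := deriv h) (a := q) (b := p) (μ := volume)
      _ ≤ ∫ x in Set.Icc a b, |deriv h x| :=
          setIntegral_mono_set hintd
            (Filter.Eventually.of_forall fun x => abs_nonneg _)
            (HasSubset.Subset.eventuallyLE hsub)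
  have step2 : ∫ x in Set.Icc a b, |deriv h x| ≤ δ * ∫ x in Set.Icc a b, g x := by
    rw [← MeasureTheory.integral_const_mul]
    exact setIntegral_mono_on hintd (hintg.const_mul δ) measurableSet_Icc hbound
  have hbdd : BddAbove (h '' Set.Icc a b) :=
    (hK.image_of_continuousOn hcont.continuousOn).bddAbove
  have hle_p : ∀ x ∈ Set.Icc a b, h x ≤ h p := by
    intro x hx
    rw [← hSp]
    exact le_csSup hbdd (Set.mem_image_of_mem h hx)
  have step3 : ∫ x in Set.Icc a b, g x ≤ h p * r := by
    rw [← hμint, ← MeasureTheory.integral_const_mul]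
    refine setIntegral_mono_on hintg (hintf.const_mul _) measurableSet_Icc ?_
    intro x hx
    have : g x = h x * f x := by
      simp only [hh]
      exact (div_mul_cancel₀ (g x) (hfne x)).symm
    rw [this]
    exact mul_le_mul_of_nonneg_right (hle_p x hx) (hfpos x).le
  have hIpos : 0 < h q := div_pos (hgpos q) (hfpos q)
  have key : h p - h q ≤ δ * (h p * r) :=
    le_trans step1 (le_trans step2 (mul_le_mul_of_nonneg_left step3 hδ.le))
  have hδr : δ * (h p * r) = ε / (1 + ε) * h p := by
    rw [hδdef]
    field_simp
  rw [hδr] at key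
  have h1ε : (0:ℝ) < 1 + ε := by linarith
  have key2 : (h p - h q) * (1 + ε) ≤ ε * h p := by
    have := key
    rw [div_mul_eq_mul_div, le_div_iff₀ h1ε] at this
    linarith
  rw [hSp, hIq]
  rw [sub_le_iff_le_add, div_le_iff₀ hIpos]
  nlinarith [key2, hIpos, hε]
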